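/- Let K be a field with elements a, b₁,…,b_{k−1}, b_k, c₁,…,c_l, d, and define (ã, b̃) = (1,a)·M_x(b₁,b₂)⋯M_x(b_{k−2},b_{k−1}) and (c̃, d̃)ᵀ = M_y(c₁,c₂)⋯M_y(c_{l−1},c_l)·(1,d)ᵀ. Set T₁ = b_k, T₂ = (1/(b₁⋯b_k·c₁⋯c_l)) · (ã,b̃) · [[1 + c₁b_{k−1}, b_k],[b_k, b_k²]] · (c̃,d̃)ᵀ, T₃ = (1/(b₁⋯b_{k−1})) · (ã,b̃)·(1,b_k)ᵀ, and T₄ = (1/(c₁⋯c_l)) · (1,b_k)·(c̃,d̃)ᵀ. Then T₁·T₂ − T₃·T₄ = (ã·c̃·c₁·b_{k−1})/(b₁⋯b_{k−1}·c₁⋯c_l), and this equals 1 since ã = b₁⋯b_{k−2} and c̃ = c₂⋯c_l. -/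
import Mathlib


def Mx {K : Type*} [Field K] (a b : K) : Matrix (Fin 2) (Fin 2) K := !![a, 1; 0, b]
def My {K : Type*} [Field K] (a b : K) : Matrix (Fin 2) (Fin 2) K := !![b, 0; 1, a]

lemma rowAux {K : Type*} [Field K] (b : ℕ → K) (n : ℕ) (r : Matrix (Fin 1) (Fin 2) K) :
    (r * ((List.range n).map fun i => Mx (b (i + 1)) (b (i + 2))).prod) 0 0 =
      r 0 0 * ∏ i ∈ Finset.range n, b (i + 1) := by
  induction n generalizing r with
  | zero => simp
  | succ n ih =>
    have step : ∀ (X : Matrix (Fin 1) (Fin 2) K) (x y : K), (X * Mx x y) 0 0 = X 0 0 * x := by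
      intro X x y
      simp [Mx, Matrix.mul_apply, Fin.sum_univ_two]
    rw [List.range_succ, List.map_append, List.prod_append, Finset.prod_range_succ]
    simp only [List.map_cons, List.map_nil, List.prod_cons, List.prod_nil, mul_one,
      ← Matrix.mul_assoc]
    rw [step, ih]
    ring

lemma colAux {K : Type*} [Field K] (c : ℕ → K) (n : ℕ) (v : Matrix (Fin 2) (Fin 1) K) :
    ((((List.range n).map fun i => My (c (i + 1)) (c (i + 2))).prod) * v) 0 0 =
      (∏ i ∈ Finset.range n, c (i + 2)) * v 0 0 := by
  induction n generalizing v with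
  | zero => simp
  | succ n ih =>
    rw [List.range_succ, List.map_append, List.prod_append, Finset.prod_range_succ]
    simp only [List.map_cons, List.map_nil, List.prod_cons, List.prod_nil, mul_one,
      Matrix.mul_assoc, ih]
    simp [My, Matrix.mul_apply, Fin.sum_univ_two]
    ring

theorem stmt_11 (K : Type*) [Field K] (k l : ℕ) (hk : 2 ≤ k) (hl : 2 ≤ l)
    (a d : K) (b c : ℕ → K)
    (hb : ∀ i, 1 ≤ i → i ≤ k → b i ≠ 0) (hc : ∀ j, 1 ≤ j → j ≤ l → c j ≠ 0)
    (rowAB : Matrix (Fin 1) (Fin 2) K)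
    (hrow : rowAB = !![1, a] *
      ((List.range (k - 2)).map fun i => Mx (b (i + 1)) (b (i + 2))).prod)
    (colCD : Matrix (Fin 2) (Fin 1) K)
    (hcol : colCD =
      (((List.range (l - 1)).map fun i => My (c (i + 1)) (c (i + 2))).prod) * !![(1 : K); d])
    (T₁ T₂ T₃ T₄ : K)
    (hT₁ : T₁ = b k)
    (hT₂ : T₂ = (1 / ((∏ i ∈ Finset.Icc 1 k, b i) * ∏ j ∈ Finset.Icc 1 l, c j)) *
      ((rowAB * !![1 + c 1 * b (k - 1), b k; b k, (b k) ^ 2] * colCD) 0 0))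
    (hT₃ : T₃ = (1 / (∏ i ∈ Finset.Icc 1 (k - 1), b i)) *
      ((rowAB * !![(1 : K); b k]) 0 0))
    (hT₄ : T₄ = (1 / (∏ j ∈ Finset.Icc 1 l, c j)) * ((!![1, b k] * colCD) 0 0)) :
    T₁ * T₂ - T₃ * T₄ =
      (rowAB 0 0 * colCD 0 0 * c 1 * b (k - 1)) /
        ((∏ i ∈ Finset.Icc 1 (k - 1), b i) * ∏ j ∈ Finset.Icc 1 l, c j) ∧
    T₁ * T₂ - T₃ * T₄ = 1 := by
  -- entries
  set A := rowAB 0 0 with hA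
  set B := rowAB 0 1 with hB
  set C := colCD 0 0 with hC
  set D := colCD 1 0 with hD
  -- products
  have hPk1 : (∏ i ∈ Finset.Icc 1 (k - 1), b i) ≠ 0 := by
    rw [Finset.prod_ne_zero_iff]
    intro i hi; rw [Finset.mem_Icc] at hi; exact hb i hi.1 (le_trans hi.2 (Nat.sub_le k 1))
  have hQl : (∏ j ∈ Finset.Icc 1 l, c j) ≠ 0 := by
    rw [Finset.prod_ne_zero_iff]
    intro j hj; rw [Finset.mem_Icc] at hj; exact hc j hj.1 hj.2
  have hbk : b k ≠ 0 := hb k (le_trans (by norm_num) hk) le_rfl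
  have hPk : (∏ i ∈ Finset.Icc 1 k, b i) = (∏ i ∈ Finset.Icc 1 (k - 1), b i) * b k := by
    have : k = (k - 1) + 1 := by omega
    rw [this, Finset.prod_Icc_succ_top (by omega), ← this]
  -- entry computations
  have hT₂' : T₂ = (1 / ((∏ i ∈ Finset.Icc 1 (k - 1), b i) * b k * ∏ j ∈ Finset.Icc 1 l, c j)) *
      (A * (1 + c 1 * b (k - 1)) * C + A * b k * D + B * b k * C + B * (b k)^2 * D) := by
    rw [hT₂, hPk]
    congr 1
    simp [Matrix.mul_apply, Fin.sum_univ_two, hA, hB, hC, hD]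
    ring
  have hT₃' : T₃ = (1 / (∏ i ∈ Finset.Icc 1 (k - 1), b i)) * (A + B * b k) := by
    rw [hT₃]
    congr 1
    simp [Matrix.mul_apply, Fin.sum_univ_two, hA, hB]
  have hT₄' : T₄ = (1 / (∏ j ∈ Finset.Icc 1 l, c j)) * (C + b k * D) := by
    rw [hT₄]
    congr 1
    simp [Matrix.mul_apply, Fin.sum_univ_two, hC, hD]
  have part1 : T₁ * T₂ - T₃ * T₄ =
      (A * C * c 1 * b (k - 1)) /
        ((∏ i ∈ Finset.Icc 1 (k - 1), b i) * ∏ j ∈ Finset.Icc 1 l, c j) := by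
    rw [hT₁, hT₂', hT₃', hT₄']
    field_simp
    ring
  refine ⟨part1, ?_⟩
  rw [part1]
  -- compute A and C
  have hAval : A = ∏ i ∈ Finset.range (k - 2), b (i + 1) := by
    rw [hA, hrow, rowAux]
    simp
  have hCval : C = ∏ i ∈ Finset.range (l - 1), c (i + 2) := by
    rw [hC, hcol, colAux]
    simp
  have hbprod : (∏ i ∈ Finset.range (k - 2), b (i + 1)) * b (k - 1) =
      ∏ i ∈ Finset.Icc 1 (k - 1), b i := by
    have h1 : Finset.Icc 1 (k - 1) = Finset.Ico 1 k := by
      rw [← Finset.Ico_add_one_right_eq_Icc]; congr 1; omega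
    rw [h1, Finset.prod_Ico_eq_prod_range]
    rw [show k - 1 = k - 2 + 1 from by omega, Finset.prod_range_succ]
    congr 1
    · apply Finset.prod_congr rfl; intro i _; congr 1; omega
    · congr 1; omega
  have hcprod : c 1 * (∏ i ∈ Finset.range (l - 1), c (i + 2)) =
      ∏ j ∈ Finset.Icc 1 l, c j := by
    have h1 : Finset.Icc 1 l = Finset.Ico 1 (l + 1) := by rw [Finset.Ico_add_one_right_eq_Icc]
    rw [h1, Finset.prod_eq_prod_Ico_succ_bot (by omega), Finset.prod_Ico_eq_prod_range,
      show l + 1 - 2 = l - 1 from by omega]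
    congr 1
    exact Finset.prod_congr rfl (fun i _ => by congr 1; omega)
  rw [hAval, hCval]
  rw [show (∏ i ∈ Finset.range (k - 2), b (i + 1)) * (∏ i ∈ Finset.range (l - 1), c (i + 2)) * c 1 * b (k - 1) = ((∏ i ∈ Finset.range (k - 2), b (i + 1)) * b (k - 1)) * (c 1 * ∏ i ∈ Finset.range (l - 1), c (i + 2)) from by ring, hbprod, hcprod]
  field_simp
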